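/- For every z ∈ ℂ with z ∉ Λ, the logarithmic derivative ζ(u) = σ'(u)/σ(u) is complex-differentiable at z, and ℘(z) = − ζ'(z), i.e. the Weierstrass ℘-function satisfies ℘(z) = −(d²/dz²) log σ(z) away from the lattice. -/

import Mathlib

open Complex

noncomputable section

/-- The lattice `Λ = ℤω₁ + ℤω₂ ⊆ ℂ`. -/
def lat (ω₁ ω₂ : ℂ) : Set ℂ := {z | ∃ m n : ℤ, z = (m : ℂ) * ω₁ + (n : ℂ) * ω₂}

/-- The Weierstrass sigma function of the lattice `Λ = ℤω₁ + ℤω₂`, defined by the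
(absolutely convergent) infinite product
`σ(z) = z · ∏_{w ∈ Λ, w ≠ 0} (1 − z/w) · exp(z/w + z²/(2w²))`. -/
def wsigma (ω₁ ω₂ : ℂ) (z : ℂ) : ℂ :=
  z * ∏' w : {w : ℂ // w ∈ lat ω₁ ω₂ ∧ w ≠ 0},
    (1 - z / (w : ℂ)) * Complex.exp (z / (w : ℂ) + z ^ 2 / (2 * (w : ℂ) ^ 2))

/-- The Weierstrass zeta function `ζ(u) = σ'(u)/σ(u)`, the logarithmic derivative of `σ`. -/
def wzeta (ω₁ ω₂ : ℂ) (u : ℂ) : ℂ :=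
  deriv (wsigma ω₁ ω₂) u / wsigma ω₁ ω₂ u

/-- The Weierstrass ℘-function of the lattice `Λ = ℤω₁ + ℤω₂`:
`℘(z) = 1/z² + ∑_{w ∈ Λ, w ≠ 0} (1/(z−w)² − 1/w²)`. -/
def wp (ω₁ ω₂ : ℂ) (z : ℂ) : ℂ :=
  1 / z ^ 2 + ∑' w : {w : ℂ // w ∈ lat ω₁ ω₂ ∧ w ≠ 0},
    (1 / (z - (w : ℂ)) ^ 2 - 1 / (w : ℂ) ^ 2)


/-! ### Auxiliary material for the proof -/

abbrev latNZ (ω₁ ω₂ : ℂ) := {w : ℂ // w ∈ lat ω₁ ω₂ ∧ w ≠ 0}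

/-- generic term-by-term differentiation of a tsum on an open set with uniform bound -/
lemma hasDerivAt_tsum_on {γ : Type*} {f f' : γ → ℂ → ℂ} {u : γ → ℝ} {s : Set ℂ}
    (hs : IsOpen s) (hu : Summable u)
    (hf : ∀ i, ∀ x ∈ s, HasDerivAt (f i) (f' i x) x)
    (hf' : ∀ i, ∀ x ∈ s, ‖f' i x‖ ≤ u i)
    (hsum : ∀ x ∈ s, Summable fun i => f i x)
    {x : ℂ} (hx : x ∈ s) :
    HasDerivAt (fun y => ∑' i, f i y) (∑' i, f' i x) x := by
  apply hasDerivAt_of_tendstoUniformlyOn hs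
    (tendstoUniformlyOn_tsum hu fun i x hxs => hf' i x hxs)
    (Filter.Eventually.of_forall fun t x hxs => HasDerivAt.fun_sum fun i _ => hf i x hxs)
    (fun x hxs => (hsum x hxs).hasSum) hx

/-- cubic bound for the log remainder -/
lemma cubic_log_bound {t : ℂ} (ht : ‖t‖ ≤ 1 / 2) :
    ‖Complex.log (1 - t) + t + t ^ 2 / 2‖ ≤ 2 * ‖t‖ ^ 3 := by
  have hslit : ∀ x : ℂ, ‖x‖ ≤ 1 / 2 → 1 - x ∈ Complex.slitPlane := by
    intro x hx
    apply Complex.mem_slitPlane_iff.2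
    left
    have : |x.re| ≤ ‖x‖ := Complex.abs_re_le_norm x
    simp only [Complex.sub_re, Complex.one_re]
    cases abs_le.1 this with | intro h1 h2 => linarith
  have hne : ∀ x : ℂ, ‖x‖ ≤ 1 / 2 → (1 : ℂ) - x ≠ 0 := by
    intro x hx h
    have : ‖(1 : ℂ) - x‖ = 0 := by rw [h, norm_zero]
    have h2 : (1 : ℝ) - ‖x‖ ≤ ‖(1:ℂ) - x‖ := by
      simpa using norm_sub_norm_le (1 : ℂ) x
    rw [this] at h2
    have hx' : ‖x‖ ≤ 1 / 2 := hx
    linarith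
  have key := Convex.norm_image_sub_le_of_norm_hasDerivWithin_le
    (f := fun x : ℂ => Complex.log (1 - x) + x + x ^ 2 / 2)
    (f' := fun x : ℂ => -(x ^ 2) / (1 - x)) (s := Metric.closedBall (0 : ℂ) ‖t‖)
    (C := 2 * ‖t‖ ^ 2) (y := t) ?_ ?_ (convex_closedBall _ _) (Metric.mem_closedBall_self (norm_nonneg t)) ?_
  · simp only [sub_zero, Complex.log_one, add_zero] at key
    norm_num at key
    calc ‖Complex.log (1 - t) + t + t ^ 2 / 2‖ ≤ 2 * ‖t‖ ^ 2 * ‖t‖ := key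
      _ = 2 * ‖t‖ ^ 3 := by ring
  · intro x hx
    have hxn : ‖x‖ ≤ 1 / 2 := le_trans (by simpa using hx) ht
    have hd : HasDerivAt (fun x : ℂ => Complex.log (1 - x) + x + x ^ 2 / 2)
        (-(x ^ 2) / (1 - x)) x := by
      have h1 : HasDerivAt (fun x : ℂ => (1 : ℂ) - x) (-1) x := by
        simpa using (hasDerivAt_id x).const_sub 1
      have h2 := h1.clog (hslit x hxn)
      have h3 := ((hasDerivAt_pow 2 x).div_const 2)
      have := (h2.fun_add (hasDerivAt_id x)).fun_add h3
      convert! this using 1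
      have := hne x hxn
      field_simp
      ring
    exact hd.hasDerivWithinAt
  · intro x hx
    have hxn : ‖x‖ ≤ ‖t‖ := by simpa using hx
    have hxn2 : ‖x‖ ≤ 1 / 2 := le_trans hxn ht
    have h1 : (1 : ℝ) / 2 ≤ ‖(1:ℂ) - x‖ := by
      have h2 : (1 : ℝ) - ‖x‖ ≤ ‖(1:ℂ) - x‖ := by simpa using norm_sub_norm_le (1 : ℂ) x
      linarith
    rw [norm_div, norm_neg, norm_pow]
    rw [div_le_iff₀ (by linarith)]
    calc ‖x‖ ^ 2 ≤ ‖t‖ ^ 2 := by gcongr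
      _ = (2 * ‖t‖ ^ 2) * (1/2) := by ring
      _ ≤ (2 * ‖t‖ ^ 2) * ‖1 - x‖ := by
          apply mul_le_mul_of_nonneg_left h1 (by positivity)
  · exact Metric.mem_closedBall.2 (by simp)

lemma lat_indep {ω₁ ω₂ : ℂ} (hω : (ω₂ / ω₁).im ≠ 0) : LinearIndependent ℝ ![ω₁, ω₂] := by
  have hω₁ : ω₁ ≠ 0 := by rintro rfl; simp at hω
  rw [LinearIndependent.pair_iff]
  intro s t hst
  have hst' : (s : ℂ) * ω₁ + (t : ℂ) * ω₂ = 0 := by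
    simpa [Complex.real_smul] using hst
  have h1 : (s : ℂ) + (t : ℂ) * (ω₂ / ω₁) = 0 := by
    field_simp
    linear_combination hst'
  have h2 := congrArg Complex.im h1
  simp [Complex.add_im, Complex.mul_im, Complex.ofReal_im, Complex.ofReal_re] at h2
  rcases h2 with h2 | h2
  · refine ⟨?_, h2⟩
    subst h2
    simp at hst'
    rcases hst' with h | h
    · exact_mod_cast h
    · exact absurd h hω₁
  · exact absurd h2 hω
noncomputable section
/-- An equiv between nonzero integer vectors and nonzero lattice points, with a norm bound. -/
lemma lat_equiv {ω₁ ω₂ : ℂ} (hω : (ω₂ / ω₁).im ≠ 0) :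
    ∃ (C : ℝ) (ψ : {v : Fin 2 → ℤ // v ≠ 0} ≃ latNZ ω₁ ω₂),
      0 < C ∧ (∀ v, ((ψ v : ℂ)) = (v.1 0 : ℂ) * ω₁ + (v.1 1 : ℂ) * ω₂) ∧
      (∀ v : {v : Fin 2 → ℤ // v ≠ 0}, ‖v.1‖ ≤ C * ‖(ψ v : ℂ)‖) := by
  have hli := lat_indep hω
  have hcard : Fintype.card (Fin 2) = Module.finrank ℝ ℂ := by
    simp [Complex.finrank_real_complex]
  let b : Module.Basis (Fin 2) ℝ ℂ := basisOfLinearIndependentOfCardEqFinrank hli hcard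
  let e : (Fin 2 → ℝ) ≃L[ℝ] ℂ := b.equivFun.symm.toContinuousLinearEquiv
  set C : ℝ := max ‖(e.symm : ℂ →L[ℝ] (Fin 2 → ℝ))‖ 1 with hC
  have hC1 : (1:ℝ) ≤ C := le_max_right _ _
  have hCpos : 0 < C := lt_of_lt_of_le one_pos hC1
  have key : ∀ v : Fin 2 → ℤ, e (fun i => (v i : ℝ)) = (v 0 : ℂ) * ω₁ + (v 1 : ℂ) * ω₂ := by
    intro v
    have hb : ⇑b = ![ω₁, ω₂] := coe_basisOfLinearIndependentOfCardEqFinrank hli hcard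
    show b.equivFun.symm (fun i => (v i : ℝ)) = _
    rw [Module.Basis.equivFun_symm_apply, Fin.sum_univ_two, hb]
    simp [Complex.real_smul]
  have normcast : ∀ v : Fin 2 → ℤ, ‖fun i => ((v i : ℝ))‖ = ‖v‖ := by
    intro v
    simp only [Pi.norm_def]
    congr 1
  have bound : ∀ v : Fin 2 → ℤ, ‖v‖ ≤ C * ‖(v 0 : ℂ) * ω₁ + (v 1 : ℂ) * ω₂‖ := by
    intro v
    calc ‖v‖ = ‖fun i => ((v i : ℝ))‖ := (normcast v).symm
      _ = ‖e.symm (e fun i => ((v i : ℝ)))‖ := by rw [e.symm_apply_apply]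
      _ ≤ ‖(e.symm : ℂ →L[ℝ] (Fin 2 → ℝ))‖ * ‖e fun i => ((v i : ℝ))‖ :=
          (e.symm : ℂ →L[ℝ] (Fin 2 → ℝ)).le_opNorm _
      _ ≤ C * ‖e fun i => ((v i : ℝ))‖ := by
          apply mul_le_mul_of_nonneg_right (le_max_left _ _) (norm_nonneg _)
      _ = C * ‖(v 0 : ℂ) * ω₁ + (v 1 : ℂ) * ω₂‖ := by rw [key]
  -- the map
  have hmapne : ∀ v : {v : Fin 2 → ℤ // v ≠ 0}, (v.1 0 : ℂ) * ω₁ + (v.1 1 : ℂ) * ω₂ ≠ 0 := by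
    intro v hv0
    have hb := bound v.1
    rw [hv0, norm_zero, mul_zero] at hb
    have : v.1 = 0 := by
      rwa [← norm_le_zero_iff]
    exact v.2 this
  let φ : {v : Fin 2 → ℤ // v ≠ 0} → latNZ ω₁ ω₂ := fun v =>
    ⟨(v.1 0 : ℂ) * ω₁ + (v.1 1 : ℂ) * ω₂, ⟨v.1 0, v.1 1, rfl⟩, hmapne v⟩
  have hinj : Function.Injective φ := by
    intro v v' hvv
    have h1 : ((v.1 0 : ℂ) - (v'.1 0)) * ω₁ + ((v.1 1 : ℂ) - (v'.1 1)) * ω₂ = 0 := by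
      have := congrArg (fun x : latNZ ω₁ ω₂ => (x : ℂ)) hvv
      simp only [φ] at this
      ring_nf
      ring_nf at this
      linear_combination this
    have h2 := bound (v.1 - v'.1)
    have h3 : ((v.1 - v'.1) 0 : ℂ) * ω₁ + ((v.1 - v'.1) 1 : ℂ) * ω₂ = 0 := by
      push_cast [Pi.sub_apply]
      linear_combination h1
    rw [h3, norm_zero, mul_zero] at h2
    have h4 : v.1 - v'.1 = 0 := by rwa [← norm_le_zero_iff]
    exact Subtype.ext (sub_eq_zero.mp h4)
  have hsurj : Function.Surjective φ := by
    rintro ⟨w, ⟨m, n, rfl⟩, hne⟩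
    refine ⟨⟨![m, n], ?_⟩, ?_⟩
    · intro h0
      apply hne
      have h0m : m = 0 := by simpa using congrFun h0 0
      have h0n : n = 0 := by simpa using congrFun h0 1
      simp [h0m, h0n]
    · apply Subtype.ext
      simp [φ]
  refine ⟨C, Equiv.ofBijective φ ⟨hinj, hsurj⟩, hCpos, fun v => rfl, fun v => ?_⟩
  exact bound v.1

lemma int_vec_norm_ge_one {v : Fin 2 → ℤ} (hv : v ≠ 0) : (1:ℝ) ≤ ‖v‖ := by
  obtain ⟨i, hi⟩ : ∃ i, v i ≠ 0 := by
    by_contra h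
    push_neg at h
    exact hv (funext h)
  calc (1:ℝ) ≤ ‖v i‖ := by
        rw [Int.norm_eq_abs]
        exact_mod_cast Int.one_le_abs hi
    _ ≤ ‖v‖ := norm_le_pi_norm v i

lemma summable_cubed {ω₁ ω₂ : ℂ} (hω : (ω₂ / ω₁).im ≠ 0) :
    Summable (fun w : latNZ ω₁ ω₂ => 1 / ‖(w : ℂ)‖ ^ 3) := by
  obtain ⟨C, ψ, hC, -, hψb⟩ := lat_equiv hω
  rw [← ψ.summable_iff]
  have base : Summable (fun v : {v : Fin 2 → ℤ // v ≠ 0} => C ^ 3 * ‖v.1‖ ^ (-(3:ℝ))) := by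
    apply Summable.mul_left
    exact (EisensteinSeries.summable_one_div_norm_rpow (by norm_num : (2:ℝ) < 3)).subtype _
  apply Summable.of_nonneg_of_le (fun v => by rw [Function.comp_apply]; positivity) _ base
  intro v
  have h1 : (1:ℝ) ≤ ‖v.1‖ := int_vec_norm_ge_one v.2
  have h2 : ‖v.1‖ ≤ C * ‖(ψ v : ℂ)‖ := hψb v
  have hw : 0 < ‖(ψ v : ℂ)‖ := by
    rcases lt_or_ge 0 ‖(ψ v : ℂ)‖ with h | h
    · exact h
    · exfalso; nlinarith
  have hrw : ‖v.1‖ ^ (-(3:ℝ)) = 1 / ‖v.1‖ ^ 3 := by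
    rw [Real.rpow_neg (norm_nonneg _), one_div]
    congr 1
    exact_mod_cast Real.rpow_natCast ‖v.1‖ 3
  rw [Function.comp_apply, hrw, mul_one_div]
  rw [div_le_div_iff₀ (by positivity) (by positivity)]
  calc (1:ℝ) * ‖v.1‖ ^ 3 = ‖v.1‖ ^ 3 := by ring
    _ ≤ (C * ‖(ψ v : ℂ)‖) ^ 3 := by
        apply pow_le_pow_left₀ (norm_nonneg _) h2
    _ = C ^ 3 * ‖(ψ v : ℂ)‖ ^ 3 := by ring

lemma finite_int_vec (B : ℝ) : {v : Fin 2 → ℤ | ‖v‖ ≤ B}.Finite := by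
  apply Set.Finite.subset (Set.Finite.pi fun _ : Fin 2 => Set.finite_Icc (-(⌈B⌉)) ⌈B⌉)
  intro v hv
  intro i _
  have h1 : ‖v i‖ ≤ B := (norm_le_pi_norm v i).trans hv
  rw [Int.norm_eq_abs] at h1
  have h2 : |(v i : ℝ)| ≤ (⌈B⌉ : ℝ) := h1.trans (Int.le_ceil B)
  have h3 : |v i| ≤ ⌈B⌉ := by exact_mod_cast (abs_le.2 (abs_le.1 h2))
  exact Set.mem_Icc.2 (abs_le.1 h3)

lemma finite_lat_ball {ω₁ ω₂ : ℂ} (hω : (ω₂ / ω₁).im ≠ 0) (M : ℝ) :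
    {w : latNZ ω₁ ω₂ | ‖(w : ℂ)‖ ≤ M}.Finite := by
  obtain ⟨C, ψ, hC, -, hψb⟩ := lat_equiv hω
  have hT : {v : {v : Fin 2 → ℤ // v ≠ 0} | ‖v.1‖ ≤ C * M}.Finite := by
    have := (finite_int_vec (C * M)).preimage
      (Set.injOn_of_injective (Subtype.val_injective (p := fun v : Fin 2 → ℤ => v ≠ 0)))
    exact this
  apply Set.Finite.subset (hT.image ψ)
  intro w hw
  refine ⟨ψ.symm w, ?_, by simp⟩
  have := hψb (ψ.symm w)
  rw [ψ.apply_symm_apply] at this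
  calc ‖(ψ.symm w).1‖ ≤ C * ‖(w : ℂ)‖ := this
    _ ≤ C * M := by apply mul_le_mul_of_nonneg_left hw hC.le

def ffW (w u : ℂ) : ℂ := (1 - u / w) * cexp (u / w + u ^ 2 / (2 * w ^ 2))
def hhW (w u : ℂ) : ℂ := 1 / (u - w) + 1 / w + u / w ^ 2
def kkW (w u : ℂ) : ℂ := -(1 / (u - w) ^ 2) + 1 / w ^ 2
def GGW (w u : ℂ) : ℂ := Complex.log (1 - u / w) + u / w + u ^ 2 / (2 * w ^ 2)

variable {w u : ℂ}

lemma ffW_ne_zero (hw : w ≠ 0) (hu : u ≠ w) : ffW w u ≠ 0 := by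
  apply mul_ne_zero _ (Complex.exp_ne_zero _)
  intro h
  field_simp at h
  rw [mul_zero] at h
  exact hu (sub_eq_zero.mp h).symm

lemma hasDerivAt_ffW (hw : w ≠ 0) (hu : u ≠ w) :
    HasDerivAt (ffW w) (ffW w u * hhW w u) u := by
  have h1 : HasDerivAt (fun u : ℂ => 1 - u / w) (-(1 / w)) u := by
    simpa using ((hasDerivAt_id u).div_const w).const_sub 1
  have h2 : HasDerivAt (fun u : ℂ => u / w + u ^ 2 / (2 * w ^ 2)) (1 / w + u / w ^ 2) u := by
    have h3 := (hasDerivAt_id u).div_const w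
    have h4 := (hasDerivAt_pow 2 u).div_const (2 * w ^ 2)
    have := h3.fun_add h4
    convert! this using 1
    field_simp
    ring
  have h5 := h2.cexp
  have := h1.fun_mul h5
  convert! this using 1
  unfold ffW hhW
  have huw : u - w ≠ 0 := sub_ne_zero.mpr hu
  have hkey : (1 - u / w) * (1 / (u - w)) = -(1 / w) := by
    field_simp
    ring
  linear_combination cexp (u / w + u ^ 2 / (2 * w ^ 2)) * hkey

lemma logDeriv_ffW (hw : w ≠ 0) (hu : u ≠ w) : logDeriv (ffW w) u = hhW w u := by
  rw [logDeriv_apply, (hasDerivAt_ffW hw hu).deriv]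
  exact mul_div_cancel_left₀ _ (ffW_ne_zero hw hu)

lemma hasDerivAt_hhW (hw : w ≠ 0) (hu : u ≠ w) :
    HasDerivAt (hhW w) (kkW w u) u := by
  have huw : u - w ≠ 0 := sub_ne_zero.mpr hu
  have h1 : HasDerivAt (fun u : ℂ => 1 / (u - w)) (-(1 / (u - w) ^ 2)) u := by
    have h0 : HasDerivAt (fun u : ℂ => u - w) 1 u := (hasDerivAt_id u).sub_const w
    have := h0.inv huw
    simp only [one_div]
    convert! this using 1
    field_simp
  have h2 : HasDerivAt (fun u : ℂ => 1 / w + u / w ^ 2) (1 / w ^ 2) u := by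
    simpa using (((hasDerivAt_id u).div_const (w ^ 2)).const_add (1 / w))
  have := h1.fun_add h2
  have heq : (fun x : ℂ => 1 / (x - w) + (1 / w + x / w ^ 2)) = hhW w := by
    funext v; unfold hhW; ring
  rw [heq] at this
  exact this

lemma hhW_eq (hw : w ≠ 0) (hu : u ≠ w) : hhW w u = u ^ 2 / (w ^ 2 * (u - w)) := by
  unfold hhW
  have huw : u - w ≠ 0 := sub_ne_zero.mpr hu
  field_simp
  ring

lemma kkW_eq (hw : w ≠ 0) (hu : u ≠ w) :
    kkW w u = u * (u - 2 * w) / (w ^ 2 * (u - w) ^ 2) := by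
  unfold kkW
  have huw : u - w ≠ 0 := sub_ne_zero.mpr hu
  field_simp
  ring

lemma one_sub_div_ne (hw : w ≠ 0) (h2 : 2 * ‖u‖ ≤ ‖w‖) : (1 : ℂ) - u / w ≠ 0 := by
  intro h
  have h1 : u / w = 1 := by linear_combination -h
  have : ‖u / w‖ = 1 := by rw [h1, norm_one]
  rw [norm_div] at this
  have hwpos : 0 < ‖w‖ := norm_pos_iff.mpr hw
  rw [div_eq_one_iff_eq hwpos.ne'] at this
  linarith [norm_pos_iff.mpr hw]

lemma norm_div_le_half (hw : w ≠ 0) (h2 : 2 * ‖u‖ ≤ ‖w‖) : ‖u / w‖ ≤ 1 / 2 := by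
  have hwpos : 0 < ‖w‖ := norm_pos_iff.mpr hw
  rw [norm_div, div_le_div_iff₀ hwpos (by norm_num)]
  linarith

lemma exp_GGW (hw : w ≠ 0) (h2 : 2 * ‖u‖ ≤ ‖w‖) : cexp (GGW w u) = ffW w u := by
  unfold GGW ffW
  rw [Complex.exp_add, Complex.exp_add, Complex.exp_log (one_sub_div_ne hw h2),
    mul_assoc, ← Complex.exp_add]

lemma GGW_bound (hw : w ≠ 0) (h2 : 2 * ‖u‖ ≤ ‖w‖) :
    ‖GGW w u‖ ≤ 2 * ‖u‖ ^ 3 * (1 / ‖w‖ ^ 3) := by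
  have hdiv : (u / w) ^ 2 / 2 = u ^ 2 / (2 * w ^ 2) := by
    rw [div_pow]; ring
  have hkey : GGW w u = Complex.log (1 - u / w) + u / w + (u / w) ^ 2 / 2 := by
    unfold GGW; rw [hdiv]
  rw [hkey]
  have := cubic_log_bound (norm_div_le_half hw h2)
  refine this.trans (le_of_eq ?_)
  rw [norm_div, div_pow]
  ring

lemma slit_GGW (hw : w ≠ 0) (h2 : 2 * ‖u‖ ≤ ‖w‖) : (1 : ℂ) - u / w ∈ Complex.slitPlane := by
  apply Complex.mem_slitPlane_iff.2
  left
  have h3 : ‖u / w‖ ≤ 1 / 2 := norm_div_le_half hw h2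
  have : |(u / w).re| ≤ ‖u / w‖ := Complex.abs_re_le_norm _
  simp only [Complex.sub_re, Complex.one_re]
  cases abs_le.1 this with | intro ha hb => linarith

lemma hasDerivAt_GGW (hw : w ≠ 0) (h2 : 2 * ‖u‖ ≤ ‖w‖) :
    HasDerivAt (GGW w) (hhW w u) u := by
  have hne : (1 : ℂ) - u / w ≠ 0 := one_sub_div_ne hw h2
  have hu : u ≠ w := by
    intro h; subst h
    have : 0 < ‖u‖ := norm_pos_iff.mpr hw
    linarith
  have huw : u - w ≠ 0 := sub_ne_zero.mpr hu
  have h1 : HasDerivAt (fun u : ℂ => 1 - u / w) (-(1 / w)) u := by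
    simpa using ((hasDerivAt_id u).div_const w).const_sub 1
  have h2' := h1.clog (slit_GGW hw h2)
  have h3 : HasDerivAt (fun u : ℂ => u / w + u ^ 2 / (2 * w ^ 2)) (1 / w + u / w ^ 2) u := by
    have h4 := (hasDerivAt_id u).div_const w
    have h5 := (hasDerivAt_pow 2 u).div_const (2 * w ^ 2)
    have := h4.fun_add h5
    convert! this using 1
    field_simp
    ring
  have := h2'.fun_add h3
  have hwu : w - u ≠ 0 := fun h => huw (by linear_combination -h)
  have heq : -(1 / w) / (1 - u / w) + (1 / w + u / w ^ 2) = hhW w u := by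
    unfold hhW
    field_simp
    ring
  rw [heq] at this
  convert! this using 1
  unfold GGW
  funext v
  ring

/-- **`℘ = −(log σ)''` away from the lattice.**
For `z ∉ Λ` the logarithmic derivative `ζ = σ'/σ` is complex-differentiable at `z`
and `℘(z) = −ζ'(z)`. -/
lemma hhW_bound {R : ℝ} {w u : ℂ} (hw : w ≠ 0) (hu : u ≠ w) (huR : ‖u‖ ≤ R)
    (hdist : ‖w‖ / 2 ≤ ‖u - w‖) (hwpos' : 0 < ‖w‖) :
    ‖hhW w u‖ ≤ 2 * R ^ 2 * (1 / ‖w‖ ^ 3) := by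
  have hR : 0 ≤ R := le_trans (norm_nonneg u) huR
  rw [hhW_eq hw hu, norm_div, norm_mul, norm_pow, norm_pow]
  have hd : 0 < ‖u - w‖ := lt_of_lt_of_le (by linarith) hdist
  calc ‖u‖ ^ 2 / (‖w‖ ^ 2 * ‖u - w‖) ≤ R ^ 2 / (‖w‖ ^ 2 * (‖w‖ / 2)) :=
        div_le_div₀ (by positivity) (by gcongr) (by positivity) (by gcongr)
    _ = 2 * R ^ 2 / ‖w‖ ^ 3 := by
        rw [div_eq_div_iff (by positivity) (by positivity)]; ring
    _ = 2 * R ^ 2 * (1 / ‖w‖ ^ 3) := div_eq_mul_one_div _ _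

lemma kkW_bound {R : ℝ} {w u : ℂ} (hw : w ≠ 0) (hu : u ≠ w) (huR : ‖u‖ ≤ R)
    (hbig : 2 * R ≤ ‖w‖) (hdist : ‖w‖ / 2 ≤ ‖u - w‖) (hwpos' : 0 < ‖w‖) :
    ‖kkW w u‖ ≤ 10 * R * (1 / ‖w‖ ^ 3) := by
  have hR : 0 ≤ R := le_trans (norm_nonneg u) huR
  have hd : 0 < ‖u - w‖ := lt_of_lt_of_le (by linarith) hdist
  rw [kkW_eq hw hu, norm_div, norm_mul, norm_mul, norm_pow, norm_pow]
  have h1 : ‖u - 2 * w‖ ≤ R + 2 * ‖w‖ := by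
    calc ‖u - 2 * w‖ ≤ ‖u‖ + ‖2 * w‖ := norm_sub_le _ _
      _ = ‖u‖ + 2 * ‖w‖ := by rw [norm_mul]; norm_num
      _ ≤ R + 2 * ‖w‖ := by linarith
  have h2 : R + 2 * ‖w‖ ≤ 5 / 2 * ‖w‖ := by linarith
  calc ‖u‖ * ‖u - 2 * w‖ / (‖w‖ ^ 2 * ‖u - w‖ ^ 2)
      ≤ R * (5 / 2 * ‖w‖) / (‖w‖ ^ 2 * (‖w‖ / 2) ^ 2) :=
        div_le_div₀ (by positivity) (mul_le_mul huR (h1.trans h2) (norm_nonneg _) hR)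
          (by positivity) (by gcongr)
    _ = 10 * R / ‖w‖ ^ 3 := by
        rw [div_eq_div_iff (by positivity) (by positivity)]; ring
    _ = 10 * R * (1 / ‖w‖ ^ 3) := div_eq_mul_one_div _ _

set_option maxHeartbeats 2000000 in
theorem wp_eq_neg_deriv_wzeta (ω₁ ω₂ : ℂ) (hω : (ω₂ / ω₁).im ≠ 0)
    (z : ℂ) (hz : z ∉ lat ω₁ ω₂) :
    DifferentiableAt ℂ (wzeta ω₁ ω₂) z ∧
    wp ω₁ ω₂ z = -deriv (wzeta ω₁ ω₂) z := by
  classical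
  -- choose a lattice-free ball
  obtain ⟨r, hr0, hrball⟩ : ∃ r > 0, ∀ u ∈ Metric.ball z r, u ∉ lat ω₁ ω₂ := by
    have h1 : (lat ω₁ ω₂ ∩ Metric.closedBall z 1) ⊆
        insert (0 : ℂ) (Subtype.val '' {w : latNZ ω₁ ω₂ | ‖(w : ℂ)‖ ≤ ‖z‖ + 1}) := by
      rintro w ⟨hw1, hw2⟩
      by_cases h0 : w = 0
      · exact Set.mem_insert_iff.2 (Or.inl h0)
      · refine Set.mem_insert_iff.2 (Or.inr ⟨⟨w, hw1, h0⟩, ?_, rfl⟩)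
        simp only [Set.mem_setOf_eq]
        have h3 : dist w z ≤ 1 := Metric.mem_closedBall.mp hw2
        calc ‖w‖ = ‖z + (w - z)‖ := by ring_nf
          _ ≤ ‖z‖ + ‖w - z‖ := norm_add_le _ _
          _ ≤ ‖z‖ + 1 := by
              rw [← dist_eq_norm] at *
              linarith
    have hKfin : (lat ω₁ ω₂ ∩ Metric.closedBall z 1).Finite :=
      Set.Finite.subset (Set.Finite.insert _ ((finite_lat_ball hω (‖z‖ + 1)).image _)) h1
    by_cases hne : (lat ω₁ ω₂ ∩ Metric.closedBall z 1).Nonempty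
    · have hclosed : IsClosed (lat ω₁ ω₂ ∩ Metric.closedBall z 1) := hKfin.isClosed
      have hzK : z ∉ lat ω₁ ω₂ ∩ Metric.closedBall z 1 := fun h => hz h.1
      have hd : 0 < Metric.infDist z (lat ω₁ ω₂ ∩ Metric.closedBall z 1) :=
        (hclosed.notMem_iff_infDist_pos hne).mp hzK
      refine ⟨min 1 (Metric.infDist z (lat ω₁ ω₂ ∩ Metric.closedBall z 1)),
        lt_min one_pos hd, ?_⟩
      intro u hu hulat
      have hball := Metric.mem_ball.mp hu
      have hu1 : dist u z < 1 := lt_of_lt_of_le hball (min_le_left _ _)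
      have huK : u ∈ lat ω₁ ω₂ ∩ Metric.closedBall z 1 :=
        ⟨hulat, Metric.mem_closedBall.2 hu1.le⟩
      have h2 := Metric.infDist_le_dist_of_mem (x := z) huK
      have h3 : dist u z < Metric.infDist z (lat ω₁ ω₂ ∩ Metric.closedBall z 1) :=
        lt_of_lt_of_le hball (min_le_right _ _)
      rw [dist_comm] at h3
      linarith
    · exact ⟨1, one_pos, fun u hu hulat =>
        hne ⟨u, hulat, Metric.mem_closedBall.2 (Metric.mem_ball.mp hu).le⟩⟩
  set R : ℝ := ‖z‖ + r with hRdef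
  have hRpos : 0 < R := by positivity
  have hmemR : ∀ u ∈ Metric.ball z r, ‖u‖ < R := by
    intro u hu
    have := Metric.mem_ball.mp hu
    calc ‖u‖ = ‖z + (u - z)‖ := by ring_nf
      _ ≤ ‖z‖ + ‖u - z‖ := norm_add_le _ _
      _ < ‖z‖ + r := by
          rw [← dist_eq_norm] at *
          linarith
  have h0lat : (0 : ℂ) ∈ lat ω₁ ω₂ := ⟨0, 0, by simp⟩
  have hune0 : ∀ u ∈ Metric.ball z r, u ≠ 0 := fun u hu h => hrball u hu (h ▸ h0lat)
  have hunew : ∀ u ∈ Metric.ball z r, ∀ w : latNZ ω₁ ω₂, u ≠ (w : ℂ) :=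
    fun u hu w h => hrball u hu (h ▸ w.2.1)
  have hwne : ∀ w : latNZ ω₁ ω₂, ((w : ℂ)) ≠ 0 := fun w => w.2.2
  have hwpos : ∀ w : latNZ ω₁ ω₂, 0 < ‖(w : ℂ)‖ := fun w => norm_pos_iff.mpr (hwne w)
  -- finite exceptional set
  have hfin := finite_lat_ball hω (2 * R)
  set S : Finset (latNZ ω₁ ω₂) := hfin.toFinset with hSdef
  have hbig : ∀ w : ↑((S : Set (latNZ ω₁ ω₂))ᶜ), 2 * R < ‖((w : latNZ ω₁ ω₂) : ℂ)‖ := by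
    rintro ⟨w, hw⟩
    have : w ∉ S := hw
    rw [hSdef, Set.Finite.mem_toFinset] at this
    exact lt_of_not_ge this
  have hb1 : ∀ u ∈ Metric.ball z r, ∀ w : ↑((S : Set (latNZ ω₁ ω₂))ᶜ),
      2 * ‖u‖ ≤ ‖((w : latNZ ω₁ ω₂) : ℂ)‖ := by
    intro u hu w
    have := hmemR u hu
    have := hbig w
    linarith
  have hb2 : ∀ u ∈ Metric.ball z r, ∀ w : ↑((S : Set (latNZ ω₁ ω₂))ᶜ),
      ‖((w : latNZ ω₁ ω₂) : ℂ)‖ / 2 ≤ ‖u - ((w : latNZ ω₁ ω₂) : ℂ)‖ := by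
    intro u hu w
    have h1 := hmemR u hu
    have h2 := hbig w
    calc ‖((w : latNZ ω₁ ω₂) : ℂ)‖ / 2 ≤ ‖((w : latNZ ω₁ ω₂) : ℂ)‖ - ‖u‖ := by linarith
      _ ≤ ‖u - ((w : latNZ ω₁ ω₂) : ℂ)‖ := by
          rw [norm_sub_rev]
          exact norm_sub_norm_le _ _
  -- summable bases
  have hsum3 := summable_cubed hω
  have hsum3c : Summable (fun w : ↑((S : Set (latNZ ω₁ ω₂))ᶜ) =>
      1 / ‖((w : latNZ ω₁ ω₂) : ℂ)‖ ^ 3) := hsum3.subtype _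
  -- GG pointwise summable on ball
  have hGsum : ∀ u ∈ Metric.ball z r,
      Summable (fun w : ↑((S : Set (latNZ ω₁ ω₂))ᶜ) => GGW ((w : latNZ ω₁ ω₂) : ℂ) u) := by
    intro u hu
    apply Summable.of_norm_bounded (hsum3c.mul_left (2 * R ^ 3))
    intro w
    refine (GGW_bound (hwne _) (hb1 u hu w)).trans ?_
    have h1 : ‖u‖ ≤ R := (hmemR u hu).le
    have := hwpos (w : latNZ ω₁ ω₂)
    have h3 : ‖u‖ ^ 3 ≤ R ^ 3 := by gcongr
    have h4 : 0 ≤ 1 / ‖((w : latNZ ω₁ ω₂) : ℂ)‖ ^ 3 := by positivity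
    calc 2 * ‖u‖ ^ 3 * (1 / ‖((w : latNZ ω₁ ω₂) : ℂ)‖ ^ 3)
        ≤ 2 * R ^ 3 * (1 / ‖((w : latNZ ω₁ ω₂) : ℂ)‖ ^ 3) := by gcongr
      _ = 2 * R ^ 3 * (1 / ‖((w : latNZ ω₁ ω₂) : ℂ)‖ ^ 3) := rfl
  -- hh pointwise summable on ball (over compl)
  have hhsum : ∀ u ∈ Metric.ball z r,
      Summable (fun w : ↑((S : Set (latNZ ω₁ ω₂))ᶜ) => hhW ((w : latNZ ω₁ ω₂) : ℂ) u) := by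
    intro u hu
    apply Summable.of_norm_bounded (hsum3c.mul_left (2 * R ^ 2))
    intro w
    exact hhW_bound (hwne _) (hunew u hu _) (hmemR u hu).le (hb2 u hu w) (hwpos _)
  -- products
  have hprodc : ∀ u ∈ Metric.ball z r,
      HasProd (fun w : ↑((S : Set (latNZ ω₁ ω₂))ᶜ) => ffW ((w : latNZ ω₁ ω₂) : ℂ) u)
        (cexp (∑' w : ↑((S : Set (latNZ ω₁ ω₂))ᶜ), GGW ((w : latNZ ω₁ ω₂) : ℂ) u)) := by
    intro u hu
    have h := ((hGsum u hu).hasSum).cexp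
    have heq : (cexp ∘ fun w : ↑((S : Set (latNZ ω₁ ω₂))ᶜ) => GGW ((w : latNZ ω₁ ω₂) : ℂ) u)
        = fun w : ↑((S : Set (latNZ ω₁ ω₂))ᶜ) => ffW ((w : latNZ ω₁ ω₂) : ℂ) u := by
      funext w
      exact exp_GGW (hwne _) (hb1 u hu w)
    rwa [heq] at h
  have hAll : ∀ u ∈ Metric.ball z r,
      HasProd (fun w : latNZ ω₁ ω₂ => ffW (w : ℂ) u)
        ((∏ w ∈ S, ffW (w : ℂ) u)
          * cexp (∑' w : ↑((S : Set (latNZ ω₁ ω₂))ᶜ), GGW ((w : latNZ ω₁ ω₂) : ℂ) u)) :=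
    fun u hu => (S.hasProd (fun w : latNZ ω₁ ω₂ => ffW (w : ℂ) u)).mul_compl (hprodc u hu)
  have hσ : ∀ u ∈ Metric.ball z r, wsigma ω₁ ω₂ u
      = u * ((∏ w ∈ S, ffW (w : ℂ) u)
          * cexp (∑' w : ↑((S : Set (latNZ ω₁ ω₂))ᶜ), GGW ((w : latNZ ω₁ ω₂) : ℂ) u)) := by
    intro u hu
    have h1 : wsigma ω₁ ω₂ u = u * ∏' w : latNZ ω₁ ω₂, ffW (w : ℂ) u := by
      unfold wsigma
      congr 1
    rw [h1, (hAll u hu).tprod_eq]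
  -- derivative of the tail sum
  have hT : ∀ u ∈ Metric.ball z r,
      HasDerivAt (fun v => ∑' w : ↑((S : Set (latNZ ω₁ ω₂))ᶜ), GGW ((w : latNZ ω₁ ω₂) : ℂ) v)
        (∑' w : ↑((S : Set (latNZ ω₁ ω₂))ᶜ), hhW ((w : latNZ ω₁ ω₂) : ℂ) u) u := by
    intro u hu
    exact hasDerivAt_tsum_on Metric.isOpen_ball (hsum3c.mul_left (2 * R ^ 2))
      (fun w x hx => hasDerivAt_GGW (hwne _) (hb1 x hx w))
      (fun w x hx => hhW_bound (hwne _) (hunew x hx _) (hmemR x hx).le (hb2 x hx w) (hwpos _))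
      (fun x hx => hGsum x hx) hu
  -- wzeta on the ball
  have hzeta : ∀ u ∈ Metric.ball z r, wzeta ω₁ ω₂ u
      = 1 / u + ((∑ w ∈ S, hhW (w : ℂ) u)
        + ∑' w : ↑((S : Set (latNZ ω₁ ω₂))ᶜ), hhW ((w : latNZ ω₁ ω₂) : ℂ) u) := by
    intro u hu
    have hu0 : u ≠ 0 := hune0 u hu
    have hPne : ∀ w ∈ S, ffW (w : ℂ) u ≠ 0 :=
      fun w _ => ffW_ne_zero (hwne w) (hunew u hu w)
    have hProdne : (∏ w ∈ S, ffW (w : ℂ) u) ≠ 0 := Finset.prod_ne_zero_iff.mpr hPne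
    -- derivative of the finite product
    have hP : HasDerivAt (fun v => ∏ w ∈ S, ffW (w : ℂ) v)
        ((∏ w ∈ S, ffW (w : ℂ) u) * ∑ w ∈ S, hhW (w : ℂ) u) u := by
      have h := HasDerivAt.fun_finsetProd
        (u := S) (f := fun w : latNZ ω₁ ω₂ => ffW (w : ℂ))
        (f' := fun w : latNZ ω₁ ω₂ => ffW (w : ℂ) u * hhW (w : ℂ) u)
        (fun w _ => hasDerivAt_ffW (hwne w) (hunew u hu w))
      have heq : ∑ w ∈ S, (∏ j ∈ S.erase w, ffW (j : ℂ) u) • (ffW (w : ℂ) u * hhW (w : ℂ) u)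
          = (∏ w ∈ S, ffW (w : ℂ) u) * ∑ w ∈ S, hhW (w : ℂ) u := by
        rw [Finset.mul_sum]
        apply Finset.sum_congr rfl
        intro w hw
        rw [smul_eq_mul, ← mul_assoc, Finset.prod_erase_mul S _ hw]
      rwa [heq] at h
    have hE : HasDerivAt (fun v =>
        cexp (∑' w : ↑((S : Set (latNZ ω₁ ω₂))ᶜ), GGW ((w : latNZ ω₁ ω₂) : ℂ) v))
        (cexp (∑' w : ↑((S : Set (latNZ ω₁ ω₂))ᶜ), GGW ((w : latNZ ω₁ ω₂) : ℂ) u)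
          * ∑' w : ↑((S : Set (latNZ ω₁ ω₂))ᶜ), hhW ((w : latNZ ω₁ ω₂) : ℂ) u) u :=
      (hT u hu).cexp
    have hF := (hasDerivAt_id' (𝕜 := ℂ) (x := u)).fun_mul (hP.fun_mul hE)
    have hev : wsigma ω₁ ω₂ =ᶠ[nhds u]
        (fun v => v * ((∏ w ∈ S, ffW (w : ℂ) v)
          * cexp (∑' w : ↑((S : Set (latNZ ω₁ ω₂))ᶜ), GGW ((w : latNZ ω₁ ω₂) : ℂ) v))) := by
      filter_upwards [Metric.isOpen_ball.mem_nhds hu] with v hv using hσ v hv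
    have hderiv : deriv (wsigma ω₁ ω₂) u = _ := hev.deriv_eq
    rw [hF.deriv] at hderiv
    show deriv (wsigma ω₁ ω₂) u / wsigma ω₁ ω₂ u = _
    rw [hderiv, hσ u hu]
    set P := ∏ w ∈ S, ffW (w : ℂ) u
    set E := cexp (∑' w : ↑((S : Set (latNZ ω₁ ω₂))ᶜ), GGW ((w : latNZ ω₁ ω₂) : ℂ) u)
    set A := ∑ w ∈ S, hhW (w : ℂ) u
    set B := ∑' w : ↑((S : Set (latNZ ω₁ ω₂))ᶜ), hhW ((w : latNZ ω₁ ω₂) : ℂ) u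
    have hEne : E ≠ 0 := Complex.exp_ne_zero _
    field_simp
  -- conclusion
  have hzmem : z ∈ Metric.ball z r := Metric.mem_ball_self hr0
  have hevz : wzeta ω₁ ω₂ =ᶠ[nhds z]
      (fun u => 1 / u + ((∑ w ∈ S, hhW (w : ℂ) u)
        + ∑' w : ↑((S : Set (latNZ ω₁ ω₂))ᶜ), hhW ((w : latNZ ω₁ ω₂) : ℂ) u)) := by
    filter_upwards [Metric.isOpen_ball.mem_nhds hzmem] with v hv using hzeta v hv
  have hZ : HasDerivAt (fun u => 1 / u + ((∑ w ∈ S, hhW (w : ℂ) u)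
        + ∑' w : ↑((S : Set (latNZ ω₁ ω₂))ᶜ), hhW ((w : latNZ ω₁ ω₂) : ℂ) u))
      (-(1 / z ^ 2) + ((∑ w ∈ S, kkW (w : ℂ) z)
        + ∑' w : ↑((S : Set (latNZ ω₁ ω₂))ᶜ), kkW ((w : latNZ ω₁ ω₂) : ℂ) z)) z := by
    have h1 : HasDerivAt (fun u : ℂ => 1 / u) (-(1 / z ^ 2)) z := by
      simpa [one_div] using hasDerivAt_inv (hune0 z hzmem)
    have h2 : HasDerivAt (fun u => ∑ w ∈ S, hhW (w : ℂ) u) (∑ w ∈ S, kkW (w : ℂ) z) z :=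
      HasDerivAt.fun_sum fun w _ => hasDerivAt_hhW (hwne w) (hunew z hzmem w)
    have h3 : HasDerivAt
        (fun u => ∑' w : ↑((S : Set (latNZ ω₁ ω₂))ᶜ), hhW ((w : latNZ ω₁ ω₂) : ℂ) u)
        (∑' w : ↑((S : Set (latNZ ω₁ ω₂))ᶜ), kkW ((w : latNZ ω₁ ω₂) : ℂ) z) z := by
      apply hasDerivAt_tsum_on Metric.isOpen_ball (hsum3c.mul_left (10 * R))
        (fun w x hx => hasDerivAt_hhW (hwne _) (hunew x hx _))
        (fun w x hx => kkW_bound (hwne _) (hunew x hx _) (hmemR x hx).le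
          (hbig w).le (hb2 x hx w) (hwpos _))
        (fun x hx => hhsum x hx) hzmem
    exact h1.fun_add (h2.fun_add h3)
  have hdiff : DifferentiableAt ℂ (wzeta ω₁ ω₂) z :=
    hZ.differentiableAt.congr_of_eventuallyEq hevz
  refine ⟨hdiff, ?_⟩
  have hderivz : deriv (wzeta ω₁ ω₂) z
      = -(1 / z ^ 2) + ((∑ w ∈ S, kkW (w : ℂ) z)
        + ∑' w : ↑((S : Set (latNZ ω₁ ω₂))ᶜ), kkW ((w : latNZ ω₁ ω₂) : ℂ) z) := by
    rw [hevz.deriv_eq]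
    exact hZ.deriv
  -- wp computation
  have hkc : Summable (fun w : ↑((S : Set (latNZ ω₁ ω₂))ᶜ) => kkW ((w : latNZ ω₁ ω₂) : ℂ) z) := by
    apply Summable.of_norm_bounded (hsum3c.mul_left (10 * R))
    intro w
    exact kkW_bound (hwne _) (hunew z hzmem _) (hmemR z hzmem).le
      (hbig w).le (hb2 z hzmem w) (hwpos _)
  have hkall : HasSum (fun w : latNZ ω₁ ω₂ => kkW (w : ℂ) z)
      ((∑ w ∈ S, kkW (w : ℂ) z)
        + ∑' w : ↑((S : Set (latNZ ω₁ ω₂))ᶜ), kkW ((w : latNZ ω₁ ω₂) : ℂ) z) :=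
    (S.hasSum (fun w : latNZ ω₁ ω₂ => kkW (w : ℂ) z)).add_compl hkc.hasSum
  have hwp : wp ω₁ ω₂ z = 1 / z ^ 2 + ∑' w : latNZ ω₁ ω₂, -(kkW (w : ℂ) z) := by
    show (1 / z ^ 2 + ∑' w : latNZ ω₁ ω₂, (1 / (z - (w : ℂ)) ^ 2 - 1 / (w : ℂ) ^ 2)) = _
    congr 1
    apply tsum_congr
    intro w
    unfold kkW
    ring
  rw [hwp, tsum_neg, hderivz, hkall.tsum_eq]
  ring
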